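/- For n > d ≥ 2, P(n, d) · V(n, d−1) ≥ n!, i.e., P(n, d) ≥ n! / V(n, d−1). -/
import Mathlib


/-- The Chebyshev distance between two permutations of `{1,…,n}`
(represented as permutations of `Fin n`): `max_i |σ(i) − τ(i)|`. -/
def permDist {n : ℕ} (σ τ : Equiv.Perm (Fin n)) : ℕ :=
  Finset.univ.sup fun i => Nat.dist (σ i : ℕ) (τ i : ℕ)

/-- `P n d` is the maximum cardinality of a set of permutations of `{1,…,n}`
whose pairwise Chebyshev distance is at least `d`. -/
noncomputable def P (n d : ℕ) : ℕ :=
  sSup {k | ∃ A : Finset (Equiv.Perm (Fin n)),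
    (∀ σ ∈ A, ∀ τ ∈ A, σ ≠ τ → d ≤ permDist σ τ) ∧ A.card = k}


/-- `V n d` is the number of permutations `π` of `{1,…,n}` with `|π(i) − i| ≤ d`
for all `i`. -/
def V (n d : ℕ) : ℕ :=
  (Finset.univ.filter fun π : Equiv.Perm (Fin n) =>
    ∀ i : Fin n, Nat.dist (π i : ℕ) (i : ℕ) ≤ d).card

lemma permDist_comm {n : ℕ} (σ τ : Equiv.Perm (Fin n)) : permDist σ τ = permDist τ σ := by
  simp [permDist, Nat.dist_comm]

lemma ball_card {n : ℕ} (σ : Equiv.Perm (Fin n)) (r : ℕ) :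
    (Finset.univ.filter fun τ => permDist σ τ ≤ r).card = V n r := by
  unfold V
  apply Finset.card_bij (fun τ _ => τ * σ⁻¹)
  · intro τ hτ
    simp only [Finset.mem_filter, Finset.mem_univ, true_and] at hτ ⊢
    rw [permDist, Finset.sup_le_iff] at hτ
    intro i
    have := hτ (σ⁻¹ i) (Finset.mem_univ _)
    have h2 : σ (σ⁻¹ i) = i := Equiv.apply_symm_apply σ i
    simpa [Equiv.Perm.mul_apply, h2, Nat.dist_comm] using this
  · intro a _ b _ h
    exact mul_right_cancel h
  · intro ρ hρ
    simp only [Finset.mem_filter, Finset.mem_univ, true_and] at hρ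
    refine ⟨ρ * σ, ?_, by group⟩
    simp only [Finset.mem_filter, Finset.mem_univ, true_and]
    rw [permDist, Finset.sup_le_iff]
    intro i _
    simpa [Equiv.Perm.mul_apply, Nat.dist_comm] using hρ (σ i)

/-- For `n > d ≥ 2`, `P(n, d) · V(n, d−1) ≥ n!`. -/
theorem stmt10 (n d : ℕ) (hd : 2 ≤ d) (hn : d < n) :
    Nat.factorial n ≤ P n d * V n (d - 1) := by
  set K := {k | ∃ A : Finset (Equiv.Perm (Fin n)),
    (∀ σ ∈ A, ∀ τ ∈ A, σ ≠ τ → d ≤ permDist σ τ) ∧ A.card = k} with hK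
  have hbdd : BddAbove K := by
    refine ⟨Fintype.card (Equiv.Perm (Fin n)), ?_⟩
    rintro k ⟨A, _, rfl⟩
    exact Finset.card_le_univ A
  have hne : K.Nonempty := ⟨0, ∅, by simp, rfl⟩
  have hmem : P n d ∈ K := Nat.sSup_mem hne hbdd
  obtain ⟨A, hA, hAcard⟩ := hmem
  -- covering property
  have cover : ∀ π : Equiv.Perm (Fin n), ∃ σ ∈ A, permDist σ π ≤ d - 1 := by
    intro π
    by_contra h
    push_neg at h
    have hπA : π ∉ A := by
      intro hπ
      have h0 : permDist π π = 0 := by simp [permDist]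
      have := h π hπ
      omega
    have : (insert π A).card ∈ K := by
      refine ⟨insert π A, ?_, rfl⟩
      intro σ hσ τ hτ hne
      have hd1 : ∀ ρ ∈ A, d ≤ permDist ρ π := fun ρ hρ => by
        have := h ρ hρ
        omega
      rcases Finset.mem_insert.mp hσ with hσ' | hσ' <;>
        rcases Finset.mem_insert.mp hτ with hτ' | hτ'
      · exact absurd (hσ'.trans hτ'.symm) hne
      · subst hσ'; rw [permDist_comm]; exact hd1 τ hτ'
      · subst hτ'; exact hd1 σ hσ'
      · exact hA σ hσ' τ hτ' hne
    have hle := le_csSup hbdd this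
    rw [Finset.card_insert_of_notMem hπA] at hle
    have hPK : P n d = sSup K := by rw [hK]; rfl
    omega
  -- counting
  have hsub : (Finset.univ : Finset (Equiv.Perm (Fin n))) ⊆
      A.biUnion (fun σ => Finset.univ.filter fun τ => permDist σ τ ≤ d - 1) := by
    intro π _
    obtain ⟨σ, hσ, hdist⟩ := cover π
    exact Finset.mem_biUnion.mpr ⟨σ, hσ, by simp [hdist]⟩
  calc Nat.factorial n = (Finset.univ : Finset (Equiv.Perm (Fin n))).card := by
        rw [Finset.card_univ, Fintype.card_perm, Fintype.card_fin]
    _ ≤ (A.biUnion (fun σ => Finset.univ.filter fun τ => permDist σ τ ≤ d - 1)).card :=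
        Finset.card_le_card hsub
    _ ≤ ∑ σ ∈ A, (Finset.univ.filter fun τ => permDist σ τ ≤ d - 1).card :=
        Finset.card_biUnion_le
    _ = ∑ _σ ∈ A, V n (d - 1) := by
        exact Finset.sum_congr rfl fun σ _ => ball_card σ (d - 1)
    _ = P n d * V n (d - 1) := by rw [Finset.sum_const, hAcard, smul_eq_mul]
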